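/- Let σ be an algebraically irreducible sequence of substitutions with finitely balanced language L_σ admitting a generalized right eigenvector u ∈ ℝ^d_{≥0}\{0}. Then u has rationally independent coordinates: there is no x ∈ ℤ^d\{0} with ⟨x, u⟩ = 0. -/

import Mathlib

/-- `σ_{[0,n)}(a)`: the word obtained by applying `σ_0 ∘ ⋯ ∘ σ_{n-1}` to the letter `a`. -/
def sadicWord {d : ℕ} (s : ℕ → Fin d → List (Fin d)) : ℕ → Fin d → List (Fin d)
  | 0, a => [a]
  | n + 1, a => (s n a).flatMap (sadicWord s n)

/-- The language of the directive sequence `σ`. -/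
def InLang {d : ℕ} (s : ℕ → Fin d → List (Fin d)) (v : List (Fin d)) : Prop :=
  ∃ n a, v <:+: sadicWord s n a

/-- The incidence matrix (over `ℚ`) of the `n`-th substitution. -/
def incQ {d : ℕ} (s : ℕ → Fin d → List (Fin d)) (n : ℕ) : Matrix (Fin d) (Fin d) ℚ :=
  Matrix.of fun i j => ((s n j).count i : ℚ)

/-- The product `M_m ⋯ M_{ℓ-1}` of incidence matrices. -/
def incQProd {d : ℕ} (s : ℕ → Fin d → List (Fin d)) (m ℓ : ℕ) : Matrix (Fin d) (Fin d) ℚ :=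
  ((List.range (ℓ - m)).map fun k => incQ s (m + k)).prod

open Filter Topology Polynomial Matrix

lemma count_flatMap {d : ℕ} (l : List (Fin d)) (f : Fin d → List (Fin d)) (i : Fin d) :
    (l.flatMap f).count i = ∑ j, l.count j * (f j).count i := by
  induction l with
  | nil => simp
  | cons b l ih =>
    rw [List.flatMap_cons, List.count_append, ih]
    have : ∀ j : Fin d, (b :: l).count j = l.count j + if b = j then 1 else 0 := by
      intro j; rw [List.count_cons]; simp [beq_iff_eq]
    simp only [this, add_mul, ite_mul, one_mul, zero_mul, Finset.sum_add_distrib,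
      Finset.sum_ite_eq, Finset.mem_univ, if_true]
    ring

lemma sadic_ne_nil {d : ℕ} (s : ℕ → Fin d → List (Fin d)) (hne : ∀ n a, s n a ≠ []) :
    ∀ n a, sadicWord s n a ≠ [] := by
  intro n
  induction n with
  | zero => intro a; simp [sadicWord]
  | succ n ih =>
    intro a
    obtain ⟨b, hb⟩ := List.exists_mem_of_ne_nil _ (hne n a)
    simp only [sadicWord, ne_eq, List.flatMap_eq_nil_iff]
    exact fun h => ih b (h b hb)

lemma inLang_infix {d : ℕ} (s : ℕ → Fin d → List (Fin d)) {v w : List (Fin d)}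
    (h : v <:+: w) (hw : InLang s w) : InLang s v := by
  obtain ⟨n, a, hn⟩ := hw; exact ⟨n, a, h.trans hn⟩

lemma incQProd_split {d : ℕ} (s : ℕ → Fin d → List (Fin d)) {m ℓ : ℕ} (h : m ≤ ℓ) :
    incQProd s 0 ℓ = incQProd s 0 m * incQProd s m ℓ := by
  unfold incQProd
  rw [Nat.sub_zero, Nat.sub_zero, ← Nat.add_sub_cancel' h, List.range_add, List.map_append,
    List.prod_append, List.map_map, Nat.add_sub_cancel_left]
  congr 2
  simp

lemma incQProd_entry {d : ℕ} (s : ℕ → Fin d → List (Fin d)) (n : ℕ) (i a : Fin d) :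
    incQProd s 0 n i a = ((sadicWord s n a).count i : ℚ) := by
  induction n generalizing a with
  | zero =>
    simp only [incQProd, Nat.sub_zero, List.range_zero, List.map_nil, List.prod_nil, sadicWord]
    rw [Matrix.one_apply]
    by_cases h : i = a <;> simp [h, List.count_cons, eq_comm]
  | succ n ih =>
    have hsplit : incQProd s 0 (n+1) = incQProd s 0 n * incQProd s n (n+1) :=
      incQProd_split s (Nat.le_succ n)
    have h1 : incQProd s n (n+1) = incQ s n := by
      have h2 : (n+1) - n = 1 := by omega
      rw [incQProd, h2]
      norm_num [List.range_succ]
    rw [hsplit, h1, Matrix.mul_apply]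
    simp only [ih, incQ, Matrix.of_apply, sadicWord, count_flatMap]
    push_cast
    exact Finset.sum_congr rfl fun j _ => mul_comm _ _

lemma prod_entries_nonneg {d : ℕ} :
    ∀ L : List (Matrix (Fin d) (Fin d) ℚ), (∀ A ∈ L, ∀ i j, 0 ≤ A i j) →
      ∀ i j, 0 ≤ L.prod i j := by
  intro L
  induction L with
  | nil =>
    intro _ i j
    rw [List.prod_nil, Matrix.one_apply]
    split <;> norm_num
  | cons A L ih =>
    intro h i j
    rw [List.prod_cons, Matrix.mul_apply]
    refine Finset.sum_nonneg fun k _ => mul_nonneg (h A (by simp) i k)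
      (ih (fun B hB => h B (by simp [hB])) k j)

lemma incQProd_nonneg {d : ℕ} (s : ℕ → Fin d → List (Fin d)) (m ℓ : ℕ) (i j : Fin d) :
    0 ≤ incQProd s m ℓ i j := by
  apply prod_entries_nonneg
  intro A hA i j
  simp only [List.mem_map] at hA
  obtain ⟨k, _, rfl⟩ := hA
  simp [incQ]

lemma incQProd_det_ne {d : ℕ} (s : ℕ → Fin d → List (Fin d))
    (hinv : ∀ n, (incQ s n).det ≠ 0) (m ℓ : ℕ) : (incQProd s m ℓ).det ≠ 0 := by
  unfold incQProd
  rw [← Matrix.coe_detMonoidHom, MonoidHom.map_list_prod, List.map_map]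
  apply List.prod_ne_zero
  intro h
  simp only [List.mem_map, Function.comp, Matrix.detMonoidHom, MonoidHom.coe_mk, OneHom.coe_mk] at h
  obtain ⟨k, _, hk⟩ := h
  exact hinv (m + k) hk

/-- Quasimorphism lemma. -/
lemma quasi_linear (a : ℕ → ℝ) (D : ℝ) (hD : 0 ≤ D)
    (h : ∀ m n, 1 ≤ m → 1 ≤ n → |a (m + n) - a m - a n| ≤ D) :
    ∃ g : ℝ, ∀ n, 1 ≤ n → |a n - n * g| ≤ D := by
  have key : ∀ k n, 1 ≤ n → 1 ≤ k → |a (k * n) - k * a n| ≤ (k - 1 : ℝ) * D := by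
    intro k
    induction k with
    | zero => intro n _ hk; omega
    | succ k ih =>
      intro n hn _
      rcases Nat.eq_zero_or_pos k with h1 | hk1
      · subst h1; simpa using hD
      · 
        have e1 := ih n hn hk1
        have e2 := h (k * n) n (Nat.one_le_iff_ne_zero.mpr (by positivity)) hn
        have heq : a ((k+1) * n) - ((k:ℝ)+1) * a n
            = (a (k * n + n) - a (k * n) - a n) + (a (k * n) - k * a n) := by
          rw [show (k+1) * n = k * n + n from by ring]
          ring
        push_cast
        rw [heq]
        calc |_| ≤ |a (k * n + n) - a (k * n) - a n| + |a (k * n) - k * a n| := abs_add_le _ _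
        _ ≤ D + (k - 1 : ℝ) * D := add_le_add e2 e1
        _ = ((k : ℝ) + 1 - 1) * D := by push_cast; ring

  have cmp : ∀ m n : ℕ, 1 ≤ m → 1 ≤ n → (a n - D) / n ≤ (a m + D) / m := by
    intro m n hm hn
    have h1 := key m n hn hm
    have h2 := key n m hm hn
    have hmn : (m * n : ℕ) = (n * m : ℕ) := Nat.mul_comm m n
    have l1 : (m : ℝ) * a n - (m - 1) * D ≤ a (m * n) := by
      have := abs_le.mp h1; linarith [this.1]
    have l2 : a (n * m) ≤ (n : ℝ) * a m + (n - 1) * D := by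
      have := abs_le.mp h2; linarith [(abs_le.mp h2).2]
    rw [hmn] at l1
    have hm0 : (0 : ℝ) < m := by exact_mod_cast hm
    have hn0 : (0 : ℝ) < n := by exact_mod_cast hn
    rw [div_le_div_iff₀ hn0 hm0]
    have : (m : ℝ) * a n - (m - 1) * D ≤ (n : ℝ) * a m + (n - 1) * D := le_trans l1 l2
    nlinarith
  set S : Set ℝ := {y | ∃ m : ℕ, 1 ≤ m ∧ y = (a m + D) / m} with hS
  have hSne : S.Nonempty := ⟨(a 1 + D) / (1:ℕ), 1, le_rfl, rfl⟩
  have hlb : ∀ n : ℕ, 1 ≤ n → (a n - D) / n ∈ lowerBounds S := by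
    intro n hn y ⟨m, hm, hy⟩
    rw [hy]; exact cmp m n hm hn
  have hbdd : BddBelow S := ⟨(a 1 - D) / (1:ℕ), hlb 1 le_rfl⟩
  refine ⟨sInf S, fun n hn => ?_⟩
  have hn0 : (0 : ℝ) < n := by exact_mod_cast hn
  have h1 : (a n - D) / n ≤ sInf S := le_csInf hSne (hlb n hn)
  have h2 : sInf S ≤ (a n + D) / n := csInf_le hbdd ⟨n, hn, rfl⟩
  rw [abs_le]
  rw [div_le_iff₀ hn0] at h1
  rw [le_div_iff₀ hn0] at h2
  constructor <;> nlinarith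

open Filter Topology Polynomial Matrix

lemma stepA {d : ℕ} (s : ℕ → Fin d → List (Fin d))
    (hne : ∀ n a, s n a ≠ [])
    (hinv : ∀ n, (incQ s n).det ≠ 0)
    (hbal : ∃ C : ℕ, ∀ v v' : List (Fin d), InLang s v → InLang s v' →
      v.length = v'.length → ∀ i, |(v.count i : ℤ) - (v'.count i : ℤ)| ≤ (C : ℤ))
    (u : Fin d → ℝ)
    (heig : (⋂ n : ℕ,
        (fun x => ((incQProd s 0 n).map (fun q : ℚ => (q : ℝ))).mulVec x) ''
          {x : Fin d → ℝ | ∀ i, 0 ≤ x i})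
      = {x : Fin d → ℝ | ∃ t : ℝ, 0 ≤ t ∧ x = t • u})
    (x : Fin d → ℤ) (heq0 : (∑ i, (x i : ℝ) * u i) = 0) :
    ∃ E : ℝ, ∀ v, InLang s v → |∑ i, (x i : ℝ) * (v.count i : ℝ)| ≤ E := by
  classical
  obtain ⟨C, hC⟩ := hbal
  set ip : List (Fin d) → ℝ := fun v => ∑ i, (x i : ℝ) * (v.count i : ℝ) with hip
  set B : ℝ := ∑ i, |(x i : ℝ)| * C with hB
  have hB0 : 0 ≤ B := Finset.sum_nonneg fun i _ => by positivity
  have hdiff : ∀ v v', InLang s v → InLang s v' → v.length = v'.length →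
      |ip v - ip v'| ≤ B := by
    intro v v' hv hv' hl
    have : ip v - ip v' = ∑ i, (x i : ℝ) * ((v.count i : ℝ) - (v'.count i : ℝ)) := by
      rw [hip]
      rw [← Finset.sum_sub_distrib]
      congr 1; ext i; ring
    rw [this]
    calc |∑ i, (x i : ℝ) * ((v.count i : ℝ) - (v'.count i : ℝ))|
        ≤ ∑ i, |(x i : ℝ) * ((v.count i : ℝ) - (v'.count i : ℝ))| :=
          Finset.abs_sum_le_sum_abs _ _
      _ ≤ B := by
          rw [hB]
          apply Finset.sum_le_sum
          intro i _
          rw [abs_mul]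
          apply mul_le_mul_of_nonneg_left _ (abs_nonneg _)
          have h1 := hC v v' hv hv' hl i
          have : ((v.count i : ℝ) - (v'.count i : ℝ)) = (((v.count i : ℤ) - (v'.count i : ℤ) : ℤ) : ℝ) := by
            push_cast; ring
          rw [this, ← Int.cast_abs]
          exact_mod_cast h1
  by_cases hbnd : ∃ N₀ : ℕ, ∀ n a, (sadicWord s n a).length ≤ N₀
  · obtain ⟨N₀, hN₀⟩ := hbnd
    refine ⟨∑ i, |(x i : ℝ)| * N₀, fun v hv => ?_⟩
    obtain ⟨n, a, hinf⟩ := hv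
    have hlen : v.length ≤ N₀ := le_trans hinf.length_le (hN₀ n a)
    calc |ip v| ≤ ∑ i, |(x i : ℝ) * (v.count i : ℝ)| := Finset.abs_sum_le_sum_abs _ _
      _ ≤ ∑ i, |(x i : ℝ)| * N₀ := by
          apply Finset.sum_le_sum
          intro i _
          rw [abs_mul]
          apply mul_le_mul_of_nonneg_left _ (abs_nonneg _)
          rw [abs_of_nonneg (by positivity : (0:ℝ) ≤ (v.count i : ℝ))]
          exact_mod_cast le_trans (List.count_le_length : v.count i ≤ v.length) hlen
  · push_neg at hbnd
    -- words of every length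
    have hexlen : ∀ N : ℕ, ∃ v, InLang s v ∧ v.length = N := by
      intro N
      obtain ⟨n, a, hna⟩ := hbnd N
      refine ⟨(sadicWord s n a).take N, ⟨n, a, (List.take_prefix _ _).isInfix⟩, ?_⟩
      rw [List.length_take]
      omega
    choose vv hvvL hvvlen using hexlen
    set aseq : ℕ → ℝ := fun N => ip (vv N) with haseq
    have hq : ∀ m n, 1 ≤ m → 1 ≤ n → |aseq (m + n) - aseq m - aseq n| ≤ 2 * B := by
      intro m n _ _
      set w := vv (m + n) with hw
      have hwL : InLang s w := hvvL _
      have hwlen : w.length = m + n := hvvlen _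
      have hsplit : ip w = ip (w.take m) + ip (w.drop m) := by
        have hw2 : w.take m ++ w.drop m = w := List.take_append_drop m w
        rw [hip]
        conv_lhs => rw [← hw2]
        simp only [List.count_append]
        push_cast
        rw [← Finset.sum_add_distrib]
        congr 1; ext i; ring
      have htakeL : InLang s (w.take m) := inLang_infix s (List.take_prefix m w).isInfix hwL
      have hdropL : InLang s (w.drop m) := inLang_infix s (List.drop_suffix m w).isInfix hwL
      have ht1 : (w.take m).length = m := by rw [List.length_take]; omega
      have ht2 : (w.drop m).length = n := by rw [List.length_drop]; omega
      have e1 : |ip (w.take m) - aseq m| ≤ B :=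
        hdiff _ _ htakeL (hvvL m) (by rw [ht1, hvvlen])
      have e2 : |ip (w.drop m) - aseq n| ≤ B :=
        hdiff _ _ hdropL (hvvL n) (by rw [ht2, hvvlen])
      have : aseq (m + n) - aseq m - aseq n
          = (ip (w.take m) - aseq m) + (ip (w.drop m) - aseq n) := by
        rw [haseq]
        simp only [← hw, hsplit]
        ring
      rw [this]
      calc |_| ≤ |ip (w.take m) - aseq m| + |ip (w.drop m) - aseq n| := abs_add_le _ _
        _ ≤ 2 * B := by linarith
    obtain ⟨g, hg⟩ := quasi_linear aseq (2 * B) (by linarith) hq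
    -- long columns
    have hlong : ∀ N : ℕ, ∃ ℓ, N ≤ ℓ ∧ ∃ a, N ≤ (sadicWord s ℓ a).length := by
      intro N
      set T := Finset.sup (Finset.range N ×ˢ (Finset.univ : Finset (Fin d)))
        (fun p => (sadicWord s p.1 p.2).length) with hT
      obtain ⟨n, a, hna⟩ := hbnd (max N T)
      refine ⟨n, ?_, a, le_trans (le_max_left _ _) (le_of_lt hna)⟩
      by_contra hcon
      push_neg at hcon
      have : (sadicWord s n a).length ≤ T := by
        exact Finset.le_sup (f := fun p : ℕ × Fin d => (sadicWord s p.1 p.2).length)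
          (b := (n, a)) (by simp [Finset.mem_product, Finset.mem_range, hcon])
      omega
    choose ℓs hℓge as hlenge using hlong
    set nsq : ℕ → ℕ := fun N => (sadicWord s (ℓs N) (as N)).length with hnsq
    set z : ℕ → Fin d → ℝ :=
      fun N i => ((sadicWord s (ℓs N) (as N)).count i : ℝ) / nsq N with hz
    have hnpos : ∀ N, 1 ≤ nsq N :=
      fun N => List.length_pos_iff.mpr (sadic_ne_nil s hne _ _)
    have hcolL : ∀ N, InLang s (sadicWord s (ℓs N) (as N)) :=
      fun N => ⟨_, _, List.infix_refl _⟩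
    have hz01 : ∀ N, z N ∈ Set.pi Set.univ (fun _ : Fin d => Set.Icc (0:ℝ) 1) := by
      intro N i _
      have hnN : (0:ℝ) < (nsq N : ℝ) := by exact_mod_cast hnpos N
      constructor
      · exact div_nonneg (by positivity) (le_of_lt hnN)
      · rw [div_le_one hnN]
        exact_mod_cast (List.count_le_length : (sadicWord s (ℓs N) (as N)).count i ≤ _)
    obtain ⟨f, -, φ, hφ, htend⟩ :=
      (isCompact_univ_pi fun _ : Fin d => isCompact_Icc).tendsto_subseq hz01
    have hcoord : ∀ i, Tendsto (fun k => z (φ k) i) atTop (𝓝 (f i)) :=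
      fun i => (tendsto_pi_nhds.mp htend) i
    have hfmem : f ∈ ⋂ n : ℕ,
        (fun x0 => ((incQProd s 0 n).map (fun q : ℚ => (q : ℝ))).mulVec x0) ''
          {x0 : Fin d → ℝ | ∀ i, 0 ≤ x0 i} := by
      rw [Set.mem_iInter]
      intro m
      set A := (incQProd s 0 m).map (fun q : ℚ => (q : ℝ)) with hA
      have hdetA : IsUnit A.det := by
        rw [isUnit_iff_ne_zero]
        have : A.det = ((incQProd s 0 m).det : ℝ) := by
          rw [hA]
          exact ((Rat.castHom ℝ).map_det (incQProd s 0 m)).symm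
        rw [this]
        exact_mod_cast incQProd_det_ne s hinv 0 m
      have hApply : ∀ N, m ≤ ℓs N →
          A.mulVec (fun j => ((incQProd s m (ℓs N) j (as N) : ℚ) : ℝ) / nsq N) = z N := by
        intro N hm
        funext i
        have key : ∑ j, ((incQProd s 0 m i j : ℚ):ℝ) * ((incQProd s m (ℓs N) j (as N) : ℚ):ℝ)
            = ((sadicWord s (ℓs N) (as N)).count i : ℝ) := by
          have h1 : incQProd s 0 (ℓs N) = incQProd s 0 m * incQProd s m (ℓs N) :=
            incQProd_split s hm
          have h2 := incQProd_entry s (ℓs N) i (as N)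
          rw [h1, Matrix.mul_apply] at h2
          calc ∑ j, ((incQProd s 0 m i j : ℚ):ℝ) * ((incQProd s m (ℓs N) j (as N) : ℚ):ℝ)
              = (((∑ j, incQProd s 0 m i j * incQProd s m (ℓs N) j (as N)) : ℚ) : ℝ) := by
                push_cast; rfl
            _ = _ := by rw [h2]; push_cast; rfl
        show ∑ j, A i j * (((incQProd s m (ℓs N) j (as N) : ℚ) : ℝ) / nsq N)
            = ((sadicWord s (ℓs N) (as N)).count i : ℝ) / nsq N
        rw [← key, Finset.sum_div]
        congr 1; ext j
        rw [hA, Matrix.map_apply]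
        ring
      refine ⟨A⁻¹.mulVec f, fun j => ?_, by
        show A.mulVec (A⁻¹.mulVec f) = f
        rw [Matrix.mulVec_mulVec, Matrix.mul_nonsing_inv _ hdetA, Matrix.one_mulVec]⟩
      have hWt : Tendsto (fun k => (A⁻¹.mulVec (z (φ k))) j) atTop
          (𝓝 ((A⁻¹.mulVec f) j)) := by
        simp only [Matrix.mulVec, dotProduct]
        exact tendsto_finset_sum _ fun l _ => ((hcoord l).const_mul _)
      apply ge_of_tendsto hWt
      filter_upwards [eventually_ge_atTop m] with k hk
      have hmN : m ≤ ℓs (φ k) := le_trans hk (le_trans hφ.le_apply (hℓge (φ k)))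
      rw [← hApply (φ k) hmN]
      have : A⁻¹.mulVec (A.mulVec
          (fun j => ((incQProd s m (ℓs (φ k)) j (as (φ k)) : ℚ) : ℝ) / nsq (φ k)))
          = (fun j => ((incQProd s m (ℓs (φ k)) j (as (φ k)) : ℚ) : ℝ) / nsq (φ k)) := by
        rw [Matrix.mulVec_mulVec, Matrix.nonsing_inv_mul _ hdetA, Matrix.one_mulVec]
      rw [this]
      have hnN : (0:ℝ) < (nsq (φ k) : ℝ) := by exact_mod_cast hnpos (φ k)
      have := incQProd_nonneg s m (ℓs (φ k)) j (as (φ k))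
      positivity
    rw [heig] at hfmem
    obtain ⟨t, ht0, hfu⟩ := hfmem
    have hxf : ∑ i, (x i : ℝ) * f i = 0 := by
      rw [hfu]
      simp only [Pi.smul_apply, smul_eq_mul]
      calc ∑ i, (x i:ℝ) * (t * u i) = t * ∑ i, (x i:ℝ) * u i := by
            rw [Finset.mul_sum]; congr 1; ext i; ring
        _ = 0 := by rw [heq0, mul_zero]
    have hS1 : Tendsto (fun k => ∑ i, (x i:ℝ) * z (φ k) i) atTop
        (𝓝 (∑ i, (x i:ℝ) * f i)) :=
      tendsto_finset_sum _ fun i _ => ((hcoord i).const_mul _)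
    have hbound : ∀ N, |(∑ i, (x i:ℝ) * z N i) - g| ≤ 3 * B / nsq N := by
      intro N
      have hnN : (0:ℝ) < (nsq N : ℝ) := by exact_mod_cast hnpos N
      have hcol : ip (sadicWord s (ℓs N) (as N)) = (∑ i, (x i:ℝ) * z N i) * nsq N := by
        rw [hip, Finset.sum_mul]
        refine Finset.sum_congr rfl fun i _ => ?_
        rw [hz]
        field_simp
      have e1 : |ip (sadicWord s (ℓs N) (as N)) - aseq (nsq N)| ≤ B :=
        hdiff _ _ (hcolL N) (hvvL _) (by rw [hvvlen])
      have e2 := hg (nsq N) (hnpos N)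
      have heq2 : (∑ i, (x i:ℝ) * z N i) - g
          = (ip (sadicWord s (ℓs N) (as N)) - (nsq N : ℝ) * g) / nsq N := by
        rw [hcol]; field_simp
      rw [heq2, abs_div, abs_of_pos hnN]
      gcongr
      calc |ip (sadicWord s (ℓs N) (as N)) - (nsq N : ℝ) * g|
          = |(ip (sadicWord s (ℓs N) (as N)) - aseq (nsq N)) + (aseq (nsq N) - (nsq N : ℝ) * g)| := by
            ring_nf
        _ ≤ |ip (sadicWord s (ℓs N) (as N)) - aseq (nsq N)| + |aseq (nsq N) - (nsq N : ℝ) * g| :=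
            abs_add_le _ _
        _ ≤ 3 * B := by linarith
    have hnφtop : Tendsto (fun k => ((nsq (φ k) : ℕ) : ℝ)) atTop atTop := by
      apply tendsto_natCast_atTop_atTop.comp
      apply tendsto_atTop_mono (fun k => le_trans hφ.le_apply (hlenge (φ k))) tendsto_id
    have hb0 : Tendsto (fun k => 3 * B / ((nsq (φ k) : ℕ) : ℝ)) atTop (𝓝 0) :=
      tendsto_const_nhds.div_atTop hnφtop
    have hS2 : Tendsto (fun k => ∑ i, (x i:ℝ) * z (φ k) i) atTop (𝓝 g) := by
      have hlo : Tendsto (fun k => g - 3 * B / ((nsq (φ k) : ℕ) : ℝ)) atTop (𝓝 g) := by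
        have := (tendsto_const_nhds : Tendsto (fun _ : ℕ => g) atTop (𝓝 g)).sub hb0
        simpa using this
      have hhi : Tendsto (fun k => g + 3 * B / ((nsq (φ k) : ℕ) : ℝ)) atTop (𝓝 g) := by
        have := (tendsto_const_nhds : Tendsto (fun _ : ℕ => g) atTop (𝓝 g)).add hb0
        simpa using this
      apply tendsto_of_tendsto_of_tendsto_of_le_of_le hlo hhi
      · intro k
        have := abs_le.mp (hbound (φ k))
        linarith [this.1]
      · intro k
        have := abs_le.mp (hbound (φ k))
        linarith [this.2]
    have hgf : g = ∑ i, (x i:ℝ) * f i := tendsto_nhds_unique hS2 hS1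
    have hg0 : g = 0 := by rw [hgf, hxf]
    refine ⟨3 * B, fun v hv => ?_⟩
    rcases Nat.eq_zero_or_pos v.length with h0 | h1
    · have hvnil : v = [] := List.length_eq_zero_iff.mp h0
      subst hvnil
      simp only [hip, List.count_nil]
      simp
      linarith
    · have e1 : |ip v - aseq v.length| ≤ B := hdiff _ _ hv (hvvL _) (by rw [hvvlen])
      have e2 := hg v.length h1
      rw [hg0, mul_zero, sub_zero] at e2
      calc |ip v| = |(ip v - aseq v.length) + aseq v.length| := by ring_nf
        _ ≤ |ip v - aseq v.length| + |aseq v.length| := abs_add_le _ _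
        _ ≤ 3 * B := by linarith

/-- If `σ` is algebraically irreducible with finitely balanced language and admits a
generalized right eigenvector `u ∈ ℝ^d_{≥0} \ {0}`, then the coordinates of `u` are
rationally independent. -/
theorem stmt16 {d : ℕ} (s : ℕ → Fin d → List (Fin d))
    (hne : ∀ n a, s n a ≠ [])
    (hinv : ∀ n, (incQ s n).det ≠ 0)
    -- algebraic irreducibility
    (hirr : ∀ m : ℕ, ∃ n > m, ∀ ℓ ≥ n, Irreducible (incQProd s m ℓ).charpoly)
    -- finite balance of the language
    (hbal : ∃ C : ℕ, ∀ v v' : List (Fin d), InLang s v → InLang s v' →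
      v.length = v'.length → ∀ i, |(v.count i : ℤ) - (v'.count i : ℤ)| ≤ (C : ℤ))
    (u : Fin d → ℝ) (hunn : ∀ i, 0 ≤ u i) (hu0 : u ≠ 0)
    -- `u` is a generalized right eigenvector
    (heig : (⋂ n : ℕ,
        (fun x => ((incQProd s 0 n).map (fun q : ℚ => (q : ℝ))).mulVec x) ''
          {x : Fin d → ℝ | ∀ i, 0 ≤ x i})
      = {x : Fin d → ℝ | ∃ t : ℝ, 0 ≤ t ∧ x = t • u}) :
    ∀ x : Fin d → ℤ, x ≠ 0 → (∑ i, (x i : ℝ) * u i) ≠ 0 := by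
  classical
  intro x hx
  rcases Nat.lt_or_ge d 2 with hd | hd
  · interval_cases d
    · exact absurd (_root_.funext fun i : Fin 0 => i.elim0) hx
    · intro h
      rw [Fin.sum_univ_one] at h
      rcases mul_eq_zero.mp h with h1 | h1
      · apply hx; funext i
        have hi : i = 0 := Subsingleton.elim _ _
        rw [hi]; exact_mod_cast h1
      · apply hu0; funext i
        have hi : i = 0 := Subsingleton.elim _ _
        rw [hi]; exact h1
  · intro heq0
    obtain ⟨E, hE⟩ := stepA s hne hinv hbal u heig x heq0
    set T : ℕ → Fin d → ℤ := fun n a => ∑ i, x i * ((sadicWord s n a).count i : ℤ) with hT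
    have hTbd : ∀ n a, T n a ∈ Set.Icc (-(⌈E⌉)) ⌈E⌉ := by
      intro n a
      have h1 := hE (sadicWord s n a) ⟨n, a, List.infix_refl _⟩
      have h2 : ((T n a : ℤ) : ℝ) = ∑ i, (x i : ℝ) * ((sadicWord s n a).count i : ℝ) := by
        rw [hT]; push_cast; rfl
      have h3 : |((T n a : ℤ) : ℝ)| ≤ E := by rw [h2]; exact h1
      have h4 : |T n a| ≤ ⌈E⌉ := by
        have h5 : ((|T n a| : ℤ) : ℝ) ≤ ((⌈E⌉ : ℤ) : ℝ) := by
          rw [Int.cast_abs]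
          exact le_trans h3 (Int.le_ceil E)
        exact_mod_cast h5
      have := abs_le.mp h4
      exact Set.mem_Icc.mpr this
    have hfin : (Set.range T).Finite := by
      apply Set.Finite.subset (Set.Finite.pi fun _ : Fin d => Set.finite_Icc (-(⌈E⌉)) ⌈E⌉)
      rintro - ⟨n, rfl⟩
      intro a _
      exact hTbd n a
    have hfiber : ∃ y, {n | T n = y}.Infinite := by
      by_contra hcon
      push_neg at hcon
      have hsub : (Set.univ : Set ℕ) ⊆ ⋃ y ∈ Set.range T, {n | T n = y} := by
        intro n _
        exact Set.mem_biUnion (Set.mem_range_self n) rfl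
      exact Set.infinite_univ
        (Set.Finite.subset (Set.Finite.biUnion hfin fun y _ => hcon y) hsub)
    obtain ⟨y, hy⟩ := hfiber
    obtain ⟨m, hm⟩ := hy.nonempty
    obtain ⟨n, hnm, hirr'⟩ := hirr m
    obtain ⟨ℓ, hℓfib, hℓn⟩ := hy.exists_gt n
    set xQ : Fin d → ℚ := fun i => (x i : ℚ) with hxQ
    set yQ : Fin d → ℚ := fun a => (y a : ℚ) with hyQ
    have hTmul : ∀ k, (incQProd s 0 k)ᵀ.mulVec xQ = fun a => (T k a : ℚ) := by
      intro k; funext a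
      show ∑ i, (incQProd s 0 k)ᵀ a i * xQ i = ((T k a : ℤ) : ℚ)
      rw [hT]
      push_cast
      refine Finset.sum_congr rfl fun i _ => ?_
      rw [Matrix.transpose_apply, incQProd_entry]
      push_cast
      ring
    have hym : (incQProd s 0 m)ᵀ.mulVec xQ = yQ := by
      rw [hTmul m]
      funext a
      rw [hyQ]
      have : T m = y := hm
      rw [this]
    have hyℓ : (incQProd s 0 ℓ)ᵀ.mulVec xQ = yQ := by
      rw [hTmul ℓ]
      funext a
      rw [hyQ]
      have : T ℓ = y := hℓfib
      rw [this]
    set P := incQProd s m ℓ with hP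
    have hsplit : incQProd s 0 ℓ = incQProd s 0 m * P :=
      incQProd_split s (by omega)
    have hfix : Pᵀ.mulVec yQ = yQ := by
      conv_lhs => rw [← hym]
      rw [Matrix.mulVec_mulVec, ← Matrix.transpose_mul, ← hsplit, hyℓ]
    have cancel : ∀ (A : Matrix (Fin d) (Fin d) ℚ), A.det ≠ 0 →
        ∀ v, A.mulVec v = 0 → v = 0 := by
      intro A hdet v hv
      have h1 : A⁻¹.mulVec (A.mulVec v) = v := by
        rw [Matrix.mulVec_mulVec, Matrix.nonsing_inv_mul _ (isUnit_iff_ne_zero.mpr hdet),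
          Matrix.one_mulVec]
      rw [← h1, hv, Matrix.mulVec_zero]
    have hy0 : yQ ≠ 0 := by
      intro h0
      apply hx
      have hxQ0 : xQ = 0 := by
        apply cancel ((incQProd s 0 m)ᵀ)
          (by rw [Matrix.det_transpose]; exact incQProd_det_ne s hinv 0 m)
        rw [hym, h0]
      funext i
      have h6 : (x i : ℚ) = 0 := by simpa [hxQ] using congrFun hxQ0 i
      exact_mod_cast h6
    have hdet1 : (1 - Pᵀ).det = 0 := by
      by_contra h0
      apply hy0
      apply cancel _ h0
      rw [Matrix.sub_mulVec, Matrix.one_mulVec, hfix, sub_self]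
    have hroot : P.charpoly.IsRoot 1 := by
      show Polynomial.eval 1 P.charpoly = 0
      have h1 : (Polynomial.evalRingHom (1:ℚ)) P.charpoly
          = ((Matrix.charmatrix P).map (Polynomial.evalRingHom (1:ℚ))).det := by
        rw [Matrix.charpoly]
        rw [RingHom.map_det]
        rw [RingHom.mapMatrix_apply]
      have h2 : (Matrix.charmatrix P).map (Polynomial.evalRingHom (1:ℚ)) = 1 - P := by
        ext i j
        rw [Matrix.map_apply, Matrix.charmatrix_apply]
        by_cases hij : i = j
        · subst hij
          simp [Matrix.one_apply, Matrix.diagonal_apply]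
        · simp [Matrix.one_apply, Matrix.diagonal_apply, hij]
      have h3 : (1 - P).det = 0 := by
        rw [← Matrix.det_transpose, Matrix.transpose_sub, Matrix.transpose_one]
        exact hdet1
      calc Polynomial.eval 1 P.charpoly
          = ((Matrix.charmatrix P).map (Polynomial.evalRingHom (1:ℚ))).det := h1
        _ = (1 - P).det := by rw [h2]
        _ = 0 := h3
    have hPirr : Irreducible P.charpoly := hirr' ℓ (le_of_lt hℓn)
    obtain ⟨q, hq⟩ := (Polynomial.dvd_iff_isRoot.mpr hroot :
      (Polynomial.X - Polynomial.C 1) ∣ P.charpoly)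
    rcases hPirr.isUnit_or_isUnit hq with hu | hu
    · exact Polynomial.not_isUnit_X_sub_C 1 hu
    · have hdeg : P.charpoly.natDegree = 1 := by
        rw [hq, Polynomial.natDegree_mul (Polynomial.X_sub_C_ne_zero 1) hu.ne_zero,
          Polynomial.natDegree_X_sub_C, Polynomial.natDegree_eq_zero_of_isUnit hu]
      have hdim : P.charpoly.natDegree = d := by
        rw [Matrix.charpoly_natDegree_eq_dim, Fintype.card_fin]
      omega
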